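/- Let E = A·B₂^d + u be an ellipsoid in ℝ^d. If for some d × d matrix A' and vector v one has E + v ⊆ A'·B₂^d, then A Aᵀ ⪯ A'(A')ᵀ in the positive semidefinite (Loewner) order. -/

import Mathlib

open scoped ENNReal
open MeasureTheory ProbabilityTheory Matrix Set Bornology

/-- The `ℓ_p` norm of a finite-dimensional real vector, `p ∈ [1,∞]`. -/
noncomputable def pnorm (p : ℝ≥0∞) {ι : Type*} [Fintype ι] (x : ι → ℝ) : ℝ :=
  if p = ∞ then ⨆ i, |x i| else (∑ i, |x i| ^ p.toReal) ^ (1 / p.toReal)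

/-- `tr_p M`: the `ℓ_p` norm of the diagonal of a square matrix. -/
noncomputable def trp (p : ℝ≥0∞) {ι : Type*} [Fintype ι] (M : Matrix ι ι ℝ) : ℝ :=
  pnorm p (fun i => M i i)

/-- The closed Euclidean unit ball. -/
def ball2 (ι : Type*) [Fintype ι] : Set (ι → ℝ) := {x | ∑ i, (x i) ^ 2 ≤ 1}

/-- `Γ_p(K) = inf { sqrt(tr_{p/2}(A Aᵀ)) : ∃ v, K + v ⊆ A · B₂ }`. -/
noncomputable def Gamma (p : ℝ≥0∞) {ι : Type*} [Fintype ι] [DecidableEq ι]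
    (K : Set (ι → ℝ)) : ℝ :=
  sInf {r : ℝ | ∃ A : Matrix ι ι ℝ,
    r = Real.sqrt (trp (p / 2) (A * Aᵀ)) ∧
    ∃ v : ι → ℝ, (fun x => x + v) '' K ⊆ (fun x => A.mulVec x) '' ball2 ι}

/-- The support function `h_K(θ) = sup_{x ∈ K} ⟨x, θ⟩`. -/
noncomputable def suppFn {ι : Type*} [Fintype ι] (K : Set (ι → ℝ)) (θ : ι → ℝ) : ℝ :=
  sSup ((fun x => ∑ i, x i * θ i) '' K)

/-- The width function `w_K(θ) = sup_{x ∈ K} ⟨x, θ⟩ - inf_{x ∈ K} ⟨x, θ⟩`. -/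
noncomputable def widthFn {ι : Type*} [Fintype ι] (K : Set (ι → ℝ)) (θ : ι → ℝ) : ℝ :=
  sSup ((fun x => ∑ i, x i * θ i) '' K) - sInf ((fun x => ∑ i, x i * θ i) '' K)

/-- If the ellipsoid `E = A·B₂^d + u` satisfies `E + v ⊆ A'·B₂^d`,
then `A Aᵀ ⪯ A'(A')ᵀ` in the Loewner order. -/
lemma key {d : ℕ} (A A' : Matrix (Fin d) (Fin d) ℝ) (u v : Fin d → ℝ)
    (h : (fun x => x + v) '' ((fun y => A.mulVec y + u) '' ball2 (Fin d)) ⊆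
      (fun y => A'.mulVec y) '' ball2 (Fin d)) (θ : Fin d → ℝ) :
    Real.sqrt ((Aᵀ.mulVec θ) ⬝ᵥ (Aᵀ.mulVec θ)) + (u + v) ⬝ᵥ θ ≤
      Real.sqrt ((A'ᵀ.mulVec θ) ⬝ᵥ (A'ᵀ.mulVec θ)) := by
  set a := Aᵀ.mulVec θ with ha
  set b := A'ᵀ.mulVec θ with hb
  have claim : ∀ y : Fin d → ℝ, (∑ i, (y i) ^ 2 ≤ 1) →
      a ⬝ᵥ y + (u + v) ⬝ᵥ θ ≤ Real.sqrt (b ⬝ᵥ b) := by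
    intro y hy
    obtain ⟨z, hz, hzeq⟩ := h ⟨A.mulVec y + u, ⟨y, hy, rfl⟩, rfl⟩
    have e : A'.mulVec z = A.mulVec y + u + v := hzeq
    have h1 : b ⬝ᵥ z = a ⬝ᵥ y + (u + v) ⬝ᵥ θ := by
      calc b ⬝ᵥ z = θ ⬝ᵥ (A'.mulVec z) := by
            rw [hb, mulVec_transpose, ← dotProduct_mulVec]
        _ = θ ⬝ᵥ (A.mulVec y + u + v) := by rw [e]
        _ = a ⬝ᵥ y + (u + v) ⬝ᵥ θ := by
            rw [dotProduct_add, dotProduct_add, dotProduct_mulVec, ← mulVec_transpose, ← ha,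
              add_dotProduct, dotProduct_comm θ u, dotProduct_comm θ v]
            ring
    rw [← h1]
    calc b ⬝ᵥ z ≤ Real.sqrt (∑ i, (b i) ^ 2) * Real.sqrt (∑ i, (z i) ^ 2) :=
          Real.sum_mul_le_sqrt_mul_sqrt _ _ _
      _ ≤ Real.sqrt (∑ i, (b i) ^ 2) * 1 :=
          mul_le_mul_of_nonneg_left (Real.sqrt_le_one.mpr hz) (Real.sqrt_nonneg _)
      _ = Real.sqrt (b ⬝ᵥ b) := by
          rw [mul_one]; congr 1; simp [dotProduct, sq]
  have haa : a ⬝ᵥ a = ∑ i, (a i) ^ 2 := by simp [dotProduct, sq]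
  rcases eq_or_ne (Real.sqrt (a ⬝ᵥ a)) 0 with h0 | h0
  · rw [h0]
    simpa using claim 0 (by simp)
  · have hpos : 0 < Real.sqrt (a ⬝ᵥ a) := lt_of_le_of_ne (Real.sqrt_nonneg _) (Ne.symm h0)
    set s := Real.sqrt (a ⬝ᵥ a) with hs
    have hsq : s ^ 2 = a ⬝ᵥ a := Real.sq_sqrt (by rw [haa]; positivity)
    have := claim (s⁻¹ • a) ?_
    · have hay : a ⬝ᵥ (s⁻¹ • a) = s := by
        rw [dotProduct_smul, smul_eq_mul, ← hsq]
        field_simp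
      rwa [hay] at this
    · have : ∑ i, ((s⁻¹ • a) i) ^ 2 = s⁻¹ ^ 2 * (a ⬝ᵥ a) := by
        simp [haa, Finset.mul_sum, mul_pow]
      rw [this, ← hsq]
      field_simp
      exact le_rfl

theorem ellipsoid_containment_loewner {d : ℕ} (A A' : Matrix (Fin d) (Fin d) ℝ)
    (u v : Fin d → ℝ)
    (h : (fun x => x + v) '' ((fun y => A.mulVec y + u) '' ball2 (Fin d)) ⊆
      (fun y => A'.mulVec y) '' ball2 (Fin d)) :
    (A' * A'ᵀ - A * Aᵀ).PosSemidef := by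
  have herm : ∀ M : Matrix (Fin d) (Fin d) ℝ, (M * Mᵀ).IsHermitian := fun M => by
    simpa using M.isHermitian_mul_conjTranspose_self
  refine PosSemidef.of_dotProduct_mulVec_nonneg ((herm A').sub (herm A)) fun x => ?_
  have q : ∀ M : Matrix (Fin d) (Fin d) ℝ,
      x ⬝ᵥ (M * Mᵀ).mulVec x = (Mᵀ.mulVec x) ⬝ᵥ (Mᵀ.mulVec x) := by
    intro M
    rw [← mulVec_mulVec, dotProduct_mulVec, ← mulVec_transpose]
  have k1 := key A A' u v h x
  have k2 := key A A' u v h (-x)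
  have hnegA : Aᵀ.mulVec (-x) ⬝ᵥ Aᵀ.mulVec (-x) = Aᵀ.mulVec x ⬝ᵥ Aᵀ.mulVec x := by
    simp [mulVec_neg]
  have hnegA' : A'ᵀ.mulVec (-x) ⬝ᵥ A'ᵀ.mulVec (-x) = A'ᵀ.mulVec x ⬝ᵥ A'ᵀ.mulVec x := by
    simp [mulVec_neg]
  rw [hnegA, hnegA', dotProduct_neg] at k2
  have hle : Real.sqrt (Aᵀ.mulVec x ⬝ᵥ Aᵀ.mulVec x) ≤
      Real.sqrt (A'ᵀ.mulVec x ⬝ᵥ A'ᵀ.mulVec x) := by linarith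
  have hA0 : (0:ℝ) ≤ Aᵀ.mulVec x ⬝ᵥ Aᵀ.mulVec x := by
    simp only [dotProduct]
    exact Finset.sum_nonneg fun i _ => mul_self_nonneg _
  have hA'0 : (0:ℝ) ≤ A'ᵀ.mulVec x ⬝ᵥ A'ᵀ.mulVec x := by
    simp only [dotProduct]
    exact Finset.sum_nonneg fun i _ => mul_self_nonneg _
  have hqq : Aᵀ.mulVec x ⬝ᵥ Aᵀ.mulVec x ≤ A'ᵀ.mulVec x ⬝ᵥ A'ᵀ.mulVec x := by
    have := pow_le_pow_left₀ (Real.sqrt_nonneg _) hle 2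
    rwa [Real.sq_sqrt hA0, Real.sq_sqrt hA'0] at this
  have : star x ⬝ᵥ (A' * A'ᵀ - A * Aᵀ).mulVec x =
      A'ᵀ.mulVec x ⬝ᵥ A'ᵀ.mulVec x - Aᵀ.mulVec x ⬝ᵥ Aᵀ.mulVec x := by
    rw [star_trivial, sub_mulVec, dotProduct_sub, q, q]
  rw [this]
  linarith
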